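/- For every a ∈ ℝ² in the closed first quadrant (a₁ ≥ 0 and a₂ ≥ 0) and every integer k ≥ 3, N_k(Σ₃, a) ≤ 12k − 6, where Σ₃ = {A₂, A₃}. -/

import Mathlib

open Matrix Set

noncomputable section

/-- `XSeq S a k` is the set of all vectors `T_{k-1} ⋯ T_0 · a` with each `T_j ∈ S`
(and `XSeq S a 0 = {a}`). -/
def XSeq {n : ℕ} (S : Set (Matrix (Fin n) (Fin n) ℝ)) (a : Fin n → ℝ) : ℕ → Set (Fin n → ℝ)
  | 0 => {a}
  | k + 1 => ⋃ A ∈ S, A.mulVec '' XSeq S a k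

/-- `PHull S a k` is the convex hull of `XSeq S a k`. -/
def PHull {n : ℕ} (S : Set (Matrix (Fin n) (Fin n) ℝ)) (a : Fin n → ℝ) (k : ℕ) :
    Set (Fin n → ℝ) :=
  convexHull ℝ (XSeq S a k)

/-- `EPts S a k` is the set of extreme points of `PHull S a k`. -/
def EPts {n : ℕ} (S : Set (Matrix (Fin n) (Fin n) ℝ)) (a : Fin n → ℝ) (k : ℕ) :
    Set (Fin n → ℝ) :=
  Set.extremePoints ℝ (PHull S a k)

/-- `NExt S a k` is the number of extreme points of `PHull S a k`. -/
def NExt {n : ℕ} (S : Set (Matrix (Fin n) (Fin n) ℝ)) (a : Fin n → ℝ) (k : ℕ) : ℕ :=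
  (EPts S a k).ncard

def M1 : Matrix (Fin 2) (Fin 2) ℝ := !![0, 1; 1, 0]
def M2 : Matrix (Fin 2) (Fin 2) ℝ := !![1, 1; 0, 1]
def M3 : Matrix (Fin 2) (Fin 2) ℝ := !![1, 0; 1, 1]
def M4 : Matrix (Fin 2) (Fin 2) ℝ := !![1, 1; 1, 0]
def M5 : Matrix (Fin 2) (Fin 2) ℝ := !![0, 1; 1, 1]

/-! ### Auxiliary machinery -/

def Mat (c : Bool) : Matrix (Fin 2) (Fin 2) ℝ := if c then M2 else M3

def ev (w : List Bool) (x : Fin 2 → ℝ) : Fin 2 → ℝ := w.foldl (fun y c => (Mat c).mulVec y) x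

lemma ev_cons (c : Bool) (w : List Bool) (x : Fin 2 → ℝ) :
    ev (c :: w) x = ev w ((Mat c).mulVec x) := rfl

lemma ev_append (u v : List Bool) (x : Fin 2 → ℝ) : ev (u ++ v) x = ev v (ev u x) :=
  List.foldl_append

lemma m2_mulVec (x : Fin 2 → ℝ) : M2.mulVec x = ![x 0 + x 1, x 1] := by
  funext i; fin_cases i <;>
    simp [M2, Matrix.mulVec, dotProduct, Fin.sum_univ_two]

lemma m3_mulVec (x : Fin 2 → ℝ) : M3.mulVec x = ![x 0, x 0 + x 1] := by
  funext i; fin_cases i <;>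
    simp [M3, Matrix.mulVec, dotProduct, Fin.sum_univ_two]

def Pm : List Bool → Matrix (Fin 2) (Fin 2) ℝ
  | [] => 1
  | c :: w => Pm w * Mat c

lemma ev_eq_Pm (w : List Bool) (x : Fin 2 → ℝ) : ev w x = (Pm w).mulVec x := by
  induction w generalizing x with
  | nil => simp [ev, Pm, Matrix.one_mulVec]
  | cons c w ih =>
    rw [ev_cons, ih, Pm, ← Matrix.mulVec_mulVec]

lemma det_Pm (w : List Bool) : (Pm w).det = 1 := by
  induction w with
  | nil => simp [Pm]
  | cons c w ih =>
    rw [Pm, Matrix.det_mul, ih, one_mul]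
    cases c <;> simp [Mat, M2, M3, Matrix.det_fin_two_of]

lemma pm_inj (w : List Bool) {x y : Fin 2 → ℝ} (h : ev w x = ev w y) : x = y := by
  rw [ev_eq_Pm, ev_eq_Pm] at h
  have hu : IsUnit (Pm w).det := by rw [det_Pm]; exact isUnit_one
  have := congrArg ((Pm w)⁻¹.mulVec) h
  rwa [Matrix.mulVec_mulVec, Matrix.mulVec_mulVec, Matrix.nonsing_inv_mul _ hu,
    Matrix.one_mulVec, Matrix.one_mulVec] at this

lemma ev_smul (w : List Bool) (c : ℝ) (x : Fin 2 → ℝ) : ev w (c • x) = c • ev w x := by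
  rw [ev_eq_Pm, ev_eq_Pm, Matrix.mulVec_smul]

lemma ev_add (w : List Bool) (x y : Fin 2 → ℝ) : ev w (x + y) = ev w x + ev w y := by
  rw [ev_eq_Pm, ev_eq_Pm, ev_eq_Pm, Matrix.mulVec_add]

lemma ev_nonneg (w : List Bool) (x : Fin 2 → ℝ) (h0 : 0 ≤ x 0) (h1 : 0 ≤ x 1) :
    0 ≤ ev w x 0 ∧ 0 ≤ ev w x 1 ∧ x 0 + x 1 ≤ ev w x 0 + ev w x 1 := by
  induction w generalizing x with
  | nil => exact ⟨h0, h1, le_rfl⟩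
  | cons c w ih =>
    rw [ev_cons]
    cases c
    · rw [show Mat false = M3 from rfl, m3_mulVec]
      obtain ⟨a1, a2, a3⟩ := ih ![x 0, x 0 + x 1] (by simpa) (by simp; linarith)
      refine ⟨a1, a2, ?_⟩
      simp only [Matrix.cons_val_zero, Matrix.cons_val_one, Matrix.head_cons] at a3
      linarith
    · rw [show Mat true = M2 from rfl, m2_mulVec]
      obtain ⟨a1, a2, a3⟩ := ih ![x 0 + x 1, x 1] (by simp; linarith) (by simpa)
      refine ⟨a1, a2, ?_⟩
      simp only [Matrix.cons_val_zero, Matrix.cons_val_one, Matrix.head_cons] at a3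
      linarith

lemma xseq_eq (a : Fin 2 → ℝ) :
    ∀ k, XSeq {M2, M3} a k = {x | ∃ w : List Bool, w.length = k ∧ ev w a = x}
  | 0 => by
    ext x
    simp only [XSeq, Set.mem_singleton_iff, Set.mem_setOf_eq, List.length_eq_zero_iff]
    constructor
    · rintro rfl; exact ⟨[], rfl, rfl⟩
    · rintro ⟨w, rfl, rfl⟩; rfl
  | (k+1) => by
    ext x
    simp only [XSeq, Set.mem_iUnion, Set.mem_image, Set.mem_insert_iff,
      Set.mem_singleton_iff, exists_prop, Set.mem_setOf_eq, xseq_eq a k]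
    constructor
    · rintro ⟨A, (rfl | rfl), y, ⟨w, hw, rfl⟩, rfl⟩
      · exact ⟨w ++ [true], by simp [hw], by rw [ev_append]; rfl⟩
      · exact ⟨w ++ [false], by simp [hw], by rw [ev_append]; rfl⟩
    · rintro ⟨w, hw, rfl⟩
      rcases w.eq_nil_or_concat with rfl | ⟨L, b, rfl⟩
      · simp at hw
      · have hL : L.length = k := by simpa [List.concat_eq_append] using hw
        cases b
        · exact ⟨M3, Or.inr rfl, ev L a, ⟨L, hL, rfl⟩, by
            rw [List.concat_eq_append, ev_append]; rfl⟩
        · exact ⟨M2, Or.inl rfl, ev L a, ⟨L, hL, rfl⟩, by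
            rw [List.concat_eq_append, ev_append]; rfl⟩

/-! ### The good-word generator and the structure lemma -/

def g : Bool → ℕ → ℕ → List Bool
  | _, 0, _ => []
  | d, n+1, 0 => List.replicate (n+1) d
  | d, n+1, j+1 => d :: g (!d) n j

lemma g_succ_zero (d : Bool) (n : ℕ) : g d (n+1) 0 = d :: g d n 0 := by
  cases n with
  | zero => rfl
  | succ m => simp [g, List.replicate_succ]

lemma g_succ_succ (d : Bool) (n j : ℕ) : g d (n+1) (j+1) = d :: g (!d) n j := rfl

lemma bool_ne {d e : Bool} (h : ¬ d = e) : (!d) = e := by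
  cases d <;> cases e <;> simp_all

lemma struct : ∀ t : List Bool,
    (∃ (u : List Bool) (c : Bool) (v : List Bool), t = u ++ c :: c :: (!c) :: v) ∨
    (∃ (d : Bool) (j : ℕ), j ≤ t.length ∧ t = g d t.length j) := by
  intro t
  induction t with
  | nil => exact Or.inr ⟨true, 0, le_rfl, rfl⟩
  | cons d s ih =>
    rcases ih with ⟨u, c, v, hu⟩ | ⟨e, j, hj, hs⟩
    · exact Or.inl ⟨d :: u, c, v, by simp [hu]⟩
    · cases s with
      | nil => exact Or.inr ⟨d, 1, by simp, rfl⟩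
      | cons e' s' =>
        cases j with
        | zero =>
          have hs1 : e' :: s' = e :: g e s'.length 0 := by
            have : e' :: s' = g e (s'.length + 1) 0 := by simpa using hs
            rwa [g_succ_zero] at this
          have he : e' = e := (List.cons.injEq _ _ _ _ ▸ hs1).1
          have hs2 : s' = g e s'.length 0 := (List.cons.injEq _ _ _ _ ▸ hs1).2
          by_cases hde : d = e
          · refine Or.inr ⟨d, 0, Nat.zero_le _, ?_⟩
            show d :: e' :: s' = g d (s'.length + 1 + 1) 0
            subst hde
            rw [g_succ_zero, g_succ_zero, he, ← hs2]
          · refine Or.inr ⟨d, 1, by simp, ?_⟩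
            show d :: e' :: s' = g d (s'.length + 1 + 1) 1
            rw [g_succ_succ, g_succ_zero, bool_ne hde, ← hs2, he]
        | succ j' =>
          have hs1 : e' :: s' = e :: g (!e) s'.length j' := by
            have : e' :: s' = g e (s'.length + 1) (j' + 1) := by simpa using hs
            rwa [g_succ_succ] at this
          have he : e' = e := (List.cons.injEq _ _ _ _ ▸ hs1).1
          have hs2 : s' = g (!e) s'.length j' := (List.cons.injEq _ _ _ _ ▸ hs1).2
          have hjb : j' + 1 ≤ s'.length + 1 := by simpa using hj
          by_cases hde : d = e
          · cases s' with
            | nil =>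
              refine Or.inr ⟨d, 0, Nat.zero_le _, ?_⟩
              show d :: [e'] = g d 2 0
              rw [g_succ_zero, he, hde]
              rfl
            | cons f r =>
              have hf : f = !e := by
                cases j' with
                | zero =>
                  have : f :: r = (!e) :: g (!e) r.length 0 := by
                    have h2 : f :: r = g (!e) (r.length + 1) 0 := by simpa using hs2
                    rwa [g_succ_zero] at h2
                  exact (List.cons.injEq _ _ _ _ ▸ this).1
                | succ m =>
                  have : f :: r = (!e) :: g (!!e) r.length m := by
                    have h2 : f :: r = g (!e) (r.length + 1) (m + 1) := by simpa using hs2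
                    rwa [g_succ_succ] at h2
                  exact (List.cons.injEq _ _ _ _ ▸ this).1
              refine Or.inl ⟨[], d, r, ?_⟩
              have he' : e' = d := by rw [he, hde]
              have hf' : f = !d := by rw [hf, hde]
              simp [he', hf']
          · refine Or.inr ⟨d, j' + 2, by simp; omega, ?_⟩
            show d :: e' :: s' = g d (s'.length + 1 + 1) (j' + 2)
            rw [g_succ_succ, g_succ_succ, bool_ne hde, ← hs2, he]

/-! ### The generic non-extremeness lemma -/

lemma not_extreme_of_cert (a : Fin 2 → ℝ) (k : ℕ) (u v P G0 G1 G2 : List Bool)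
    (hP : P.length = 4) (h0 : G0.length = 4) (h1 : G1.length = 4) (h2 : G2.length = 4)
    (hk : (u ++ P ++ v).length = k)
    (n0 n1 n2 : ℝ)
    (hcert : (n0 + n1 + n2) • ev P (ev u a) =
      n0 • ev G0 (ev u a) + n1 • ev G1 (ev u a) + n2 • ev G2 (ev u a))
    (hn0 : 0 < n0) (hn1 : 0 ≤ n1) (hn2 : 0 < n2)
    (hne : ev G0 (ev u a) ≠ ev P (ev u a)) :
    ev (u ++ P ++ v) a ∉ EPts {M2, M3} a k := by
  intro hx
  have hD : (0:ℝ) < n0 + n1 + n2 := by linarith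
  have h12 : (0:ℝ) < n1 + n2 := by linarith
  have hmem : ∀ w : List Bool, w.length = 4 → ev (u ++ w ++ v) a ∈ PHull {M2, M3} a k := by
    intro w hw
    apply subset_convexHull
    rw [xseq_eq]
    refine ⟨u ++ w ++ v, ?_, rfl⟩
    simp only [List.length_append, hw, hP] at hk ⊢
    omega
  have hY0 := hmem G0 h0
  have hY1 := hmem G1 h1
  have hY2 := hmem G2 h2
  have key : ∀ w : List Bool, ev (u ++ w ++ v) a = ev v (ev w (ev u a)) := by
    intro w; rw [List.append_assoc, ev_append, ev_append]
  have hcert' : (n0 + n1 + n2) • ev (u ++ P ++ v) a =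
      n0 • ev (u ++ G0 ++ v) a + n1 • ev (u ++ G1 ++ v) a + n2 • ev (u ++ G2 ++ v) a := by
    have hc := congrArg (ev v) hcert
    rw [ev_add, ev_add, ev_smul, ev_smul, ev_smul, ev_smul] at hc
    rw [key, key, key, key]
    exact hc
  set t := ev (u ++ P ++ v) a with hts
  set Y0 := ev (u ++ G0 ++ v) a with hY0s
  set x₂ := (n1 / (n1 + n2)) • ev (u ++ G1 ++ v) a + (n2 / (n1 + n2)) • ev (u ++ G2 ++ v) a
    with hx2
  have hx₂ : x₂ ∈ PHull {M2, M3} a k := by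
    have hconv : Convex ℝ (PHull {M2, M3} a k) := convex_convexHull ℝ _
    exact hconv hY1 hY2 (div_nonneg hn1 h12.le) (div_nonneg hn2.le h12.le)
      (by field_simp)
  have hseg : t ∈ openSegment ℝ Y0 x₂ := by
    refine ⟨n0 / (n0 + n1 + n2), (n1 + n2) / (n0 + n1 + n2), div_pos hn0 hD, div_pos h12 hD,
      by field_simp; ring, ?_⟩
    have ht : t = (n0 + n1 + n2)⁻¹ •
        (n0 • Y0 + n1 • ev (u ++ G1 ++ v) a + n2 • ev (u ++ G2 ++ v) a) := by
      rw [← hcert', smul_smul, inv_mul_cancel₀ hD.ne', one_smul]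
    rw [ht, hx2]
    match_scalars <;> (field_simp; try ring)
  obtain ⟨-, hext⟩ := hx
  have hY0t : Y0 = t := (hext hY0 hx₂ hseg)
  apply hne
  apply pm_inj v
  rw [← key, ← key, ← hY0s, ← hts, hY0t]


lemma cert1 (x : Fin 2 → ℝ) :
    ((x 0 ^ 2 + 3 * x 0 * x 1 + x 1 ^ 2) + (2 * x 1 ^ 2) + (x 0 ^ 2 + 5 * x 0 * x 1 + 5 * x 1 ^ 2)) • ev [true, true, true, false] x =
      (x 0 ^ 2 + 3 * x 0 * x 1 + x 1 ^ 2) • ev [true, true, true, true] x + (2 * x 1 ^ 2) • ev [true, true, false, true] x + (x 0 ^ 2 + 5 * x 0 * x 1 + 5 * x 1 ^ 2) • ev [true, true, false, false] x := by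
  funext i; fin_cases i <;>
    (simp [ev, Mat, M2, M3, Matrix.mulVec, dotProduct, Fin.sum_univ_two]; ring)

lemma certne1 (x : Fin 2 → ℝ) (h0 : 0 ≤ x 0) (h1 : 0 ≤ x 1) (hpq : 0 < x 0 + x 1) :
    ev [true, true, true, true] x ≠ ev [true, true, true, false] x := by
  intro h
  have e0 := congrFun h 0
  have e1 := congrFun h 1
  simp [ev, Mat, M2, M3, Matrix.mulVec, dotProduct, Fin.sum_univ_two] at e0 e1
  linarith

lemma pat1 (a : Fin 2 → ℝ) (ha0 : 0 ≤ a 0) (ha1 : 0 ≤ a 1) (hpos : 0 < a 0 + a 1)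
    (k : ℕ) (u v : List Bool) (hk : (u ++ [true, true, true, false] ++ v).length = k) :
    ev (u ++ [true, true, true, false] ++ v) a ∉ EPts {M2, M3} a k := by
  obtain ⟨hp, hq, hs⟩ := ev_nonneg u a ha0 ha1
  have hpq : 0 < ev u a 0 + ev u a 1 := lt_of_lt_of_le hpos hs
  refine not_extreme_of_cert a k u v [true, true, true, false] [true, true, true, true] [true, true, false, true] [true, true, false, false] rfl rfl rfl rfl hk
    _ _ _ (cert1 (ev u a)) ?_ ?_ ?_ (certne1 (ev u a) hp hq hpq)
  · nlinarith [mul_pos hpq hpq, mul_nonneg hp hq, sq_nonneg (ev u a 0), sq_nonneg (ev u a 1)]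
  · nlinarith [mul_pos hpq hpq, mul_nonneg hp hq, sq_nonneg (ev u a 0), sq_nonneg (ev u a 1)]
  · nlinarith [mul_pos hpq hpq, mul_nonneg hp hq, sq_nonneg (ev u a 0), sq_nonneg (ev u a 1)]

lemma cert2 (x : Fin 2 → ℝ) :
    ((x 1 ^ 2 + 3 * x 0 * x 1 + x 0 ^ 2) + (2 * x 0 ^ 2) + (x 1 ^ 2 + 5 * x 0 * x 1 + 5 * x 0 ^ 2)) • ev [false, false, false, true] x =
      (x 1 ^ 2 + 3 * x 0 * x 1 + x 0 ^ 2) • ev [false, false, false, false] x + (2 * x 0 ^ 2) • ev [false, false, true, false] x + (x 1 ^ 2 + 5 * x 0 * x 1 + 5 * x 0 ^ 2) • ev [false, false, true, true] x := by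
  funext i; fin_cases i <;>
    (simp [ev, Mat, M2, M3, Matrix.mulVec, dotProduct, Fin.sum_univ_two]; ring)

lemma certne2 (x : Fin 2 → ℝ) (h0 : 0 ≤ x 0) (h1 : 0 ≤ x 1) (hpq : 0 < x 0 + x 1) :
    ev [false, false, false, false] x ≠ ev [false, false, false, true] x := by
  intro h
  have e0 := congrFun h 0
  have e1 := congrFun h 1
  simp [ev, Mat, M2, M3, Matrix.mulVec, dotProduct, Fin.sum_univ_two] at e0 e1
  linarith

lemma pat2 (a : Fin 2 → ℝ) (ha0 : 0 ≤ a 0) (ha1 : 0 ≤ a 1) (hpos : 0 < a 0 + a 1)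
    (k : ℕ) (u v : List Bool) (hk : (u ++ [false, false, false, true] ++ v).length = k) :
    ev (u ++ [false, false, false, true] ++ v) a ∉ EPts {M2, M3} a k := by
  obtain ⟨hp, hq, hs⟩ := ev_nonneg u a ha0 ha1
  have hpq : 0 < ev u a 0 + ev u a 1 := lt_of_lt_of_le hpos hs
  refine not_extreme_of_cert a k u v [false, false, false, true] [false, false, false, false] [false, false, true, false] [false, false, true, true] rfl rfl rfl rfl hk
    _ _ _ (cert2 (ev u a)) ?_ ?_ ?_ (certne2 (ev u a) hp hq hpq)
  · nlinarith [mul_pos hpq hpq, mul_nonneg hp hq, sq_nonneg (ev u a 0), sq_nonneg (ev u a 1)]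
  · nlinarith [mul_pos hpq hpq, mul_nonneg hp hq, sq_nonneg (ev u a 0), sq_nonneg (ev u a 1)]
  · nlinarith [mul_pos hpq hpq, mul_nonneg hp hq, sq_nonneg (ev u a 0), sq_nonneg (ev u a 1)]

lemma cert3 (x : Fin 2 → ℝ) :
    ((1:ℝ) + (2:ℝ) + (3:ℝ)) • ev [false, true, true, false] x =
      (1:ℝ) • ev [true, false, true, false] x + (2:ℝ) • ev [false, true, false, true] x + (3:ℝ) • ev [false, true, false, false] x := by
  funext i; fin_cases i <;>
    (simp [ev, Mat, M2, M3, Matrix.mulVec, dotProduct, Fin.sum_univ_two]; ring)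

lemma certne3 (x : Fin 2 → ℝ) (h0 : 0 ≤ x 0) (h1 : 0 ≤ x 1) (hpq : 0 < x 0 + x 1) :
    ev [true, false, true, false] x ≠ ev [false, true, true, false] x := by
  intro h
  have e0 := congrFun h 0
  have e1 := congrFun h 1
  simp [ev, Mat, M2, M3, Matrix.mulVec, dotProduct, Fin.sum_univ_two] at e0 e1
  linarith

lemma pat3 (a : Fin 2 → ℝ) (ha0 : 0 ≤ a 0) (ha1 : 0 ≤ a 1) (hpos : 0 < a 0 + a 1)
    (k : ℕ) (u v : List Bool) (hk : (u ++ [false, true, true, false] ++ v).length = k) :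
    ev (u ++ [false, true, true, false] ++ v) a ∉ EPts {M2, M3} a k := by
  obtain ⟨hp, hq, hs⟩ := ev_nonneg u a ha0 ha1
  have hpq : 0 < ev u a 0 + ev u a 1 := lt_of_lt_of_le hpos hs
  refine not_extreme_of_cert a k u v [false, true, true, false] [true, false, true, false] [false, true, false, true] [false, true, false, false] rfl rfl rfl rfl hk
    _ _ _ (cert3 (ev u a)) ?_ ?_ ?_ (certne3 (ev u a) hp hq hpq)
  · nlinarith [mul_pos hpq hpq, mul_nonneg hp hq, sq_nonneg (ev u a 0), sq_nonneg (ev u a 1)]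
  · nlinarith [mul_pos hpq hpq, mul_nonneg hp hq, sq_nonneg (ev u a 0), sq_nonneg (ev u a 1)]
  · nlinarith [mul_pos hpq hpq, mul_nonneg hp hq, sq_nonneg (ev u a 0), sq_nonneg (ev u a 1)]

lemma cert4 (x : Fin 2 → ℝ) :
    ((3:ℝ) + (1:ℝ) + (2:ℝ)) • ev [true, false, false, true] x =
      (3:ℝ) • ev [true, true, false, true] x + (1:ℝ) • ev [true, false, true, false] x + (2:ℝ) • ev [false, true, false, true] x := by
  funext i; fin_cases i <;>
    (simp [ev, Mat, M2, M3, Matrix.mulVec, dotProduct, Fin.sum_univ_two]; ring)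

lemma certne4 (x : Fin 2 → ℝ) (h0 : 0 ≤ x 0) (h1 : 0 ≤ x 1) (hpq : 0 < x 0 + x 1) :
    ev [true, true, false, true] x ≠ ev [true, false, false, true] x := by
  intro h
  have e0 := congrFun h 0
  have e1 := congrFun h 1
  simp [ev, Mat, M2, M3, Matrix.mulVec, dotProduct, Fin.sum_univ_two] at e0 e1
  linarith

lemma pat4 (a : Fin 2 → ℝ) (ha0 : 0 ≤ a 0) (ha1 : 0 ≤ a 1) (hpos : 0 < a 0 + a 1)
    (k : ℕ) (u v : List Bool) (hk : (u ++ [true, false, false, true] ++ v).length = k) :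
    ev (u ++ [true, false, false, true] ++ v) a ∉ EPts {M2, M3} a k := by
  obtain ⟨hp, hq, hs⟩ := ev_nonneg u a ha0 ha1
  have hpq : 0 < ev u a 0 + ev u a 1 := lt_of_lt_of_le hpos hs
  refine not_extreme_of_cert a k u v [true, false, false, true] [true, true, false, true] [true, false, true, false] [false, true, false, true] rfl rfl rfl rfl hk
    _ _ _ (cert4 (ev u a)) ?_ ?_ ?_ (certne4 (ev u a) hp hq hpq)
  · nlinarith [mul_pos hpq hpq, mul_nonneg hp hq, sq_nonneg (ev u a 0), sq_nonneg (ev u a 1)]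
  · nlinarith [mul_pos hpq hpq, mul_nonneg hp hq, sq_nonneg (ev u a 0), sq_nonneg (ev u a 1)]
  · nlinarith [mul_pos hpq hpq, mul_nonneg hp hq, sq_nonneg (ev u a 0), sq_nonneg (ev u a 1)]

/-- `N_k(Σ₃, a) ≤ 12k - 6` for `a` in the closed first quadrant and `k ≥ 3`,
where `Σ₃ = {A₂, A₃}`. -/
theorem stmt16 (a : Fin 2 → ℝ) (ha : 0 ≤ a 0 ∧ 0 ≤ a 1) (k : ℕ) (hk : 3 ≤ k) :
    NExt {M2, M3} a k ≤ 12 * k - 6 := by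
  classical
  obtain ⟨ha0, ha1⟩ := ha
  by_cases hzero : a = 0
  · -- degenerate case
    subst hzero
    have hX : XSeq {M2, M3} (0 : Fin 2 → ℝ) k = {0} := by
      rw [xseq_eq]
      ext x
      simp only [Set.mem_setOf_eq, Set.mem_singleton_iff]
      constructor
      · rintro ⟨w, -, rfl⟩
        have : ev w ((0:ℝ) • (0 : Fin 2 → ℝ)) = (0:ℝ) • ev w 0 := ev_smul w 0 0
        simpa using this
      · rintro rfl
        exact ⟨List.replicate k true, by simp, by
          have : ev (List.replicate k true) ((0:ℝ) • (0 : Fin 2 → ℝ)) =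
              (0:ℝ) • ev (List.replicate k true) 0 := ev_smul _ 0 0
          simpa using this⟩
    have hsub : EPts {M2, M3} (0 : Fin 2 → ℝ) k ⊆ {0} := by
      have h1 : EPts {M2, M3} (0 : Fin 2 → ℝ) k ⊆ PHull {M2, M3} (0 : Fin 2 → ℝ) k :=
        extremePoints_subset
      have h2 : PHull {M2, M3} (0 : Fin 2 → ℝ) k = {0} := by
        rw [PHull, hX, convexHull_singleton]
      rw [h2] at h1
      exact h1
    have : NExt {M2, M3} (0 : Fin 2 → ℝ) k ≤ 1 := by
      rw [NExt]
      calc (EPts {M2, M3} (0 : Fin 2 → ℝ) k).ncard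
          ≤ ({0} : Set (Fin 2 → ℝ)).ncard :=
            Set.ncard_le_ncard hsub (Set.finite_singleton 0)
        _ = 1 := Set.ncard_singleton 0
    omega
  · have hpos : 0 < a 0 + a 1 := by
      rcases lt_or_eq_of_le ha0 with h | h
      · linarith
      rcases lt_or_eq_of_le ha1 with h' | h'
      · linarith
      exfalso
      apply hzero
      funext i
      fin_cases i
      · exact h.symm
      · exact h'.symm
    set F : Finset (Fin 2 → ℝ) :=
      ((Finset.univ : Finset Bool) ×ˢ (Finset.univ : Finset Bool) ×ˢ Finset.range k).image
        (fun cdj => ev (cdj.1 :: g cdj.2.1 (k-1) cdj.2.2) a) with hF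
    have hsub : EPts {M2, M3} a k ⊆ ↑F := by
      intro x hx
      have hxX : x ∈ XSeq {M2, M3} a k := by
        have hx' : x ∈ Set.extremePoints ℝ (convexHull ℝ (XSeq {M2, M3} a k)) := hx
        exact extremePoints_convexHull_subset hx'
      rw [xseq_eq] at hxX
      obtain ⟨w, hwlen, rfl⟩ := hxX
      cases w with
      | nil => simp at hwlen; omega
      | cons c t =>
        have htlen : t.length = k - 1 := by
          simp only [List.length_cons] at hwlen; omega
        rcases struct t with ⟨u, c', v, ht⟩ | ⟨d, j, hj, ht⟩
        · exfalso
          rcases (c :: u).eq_nil_or_concat with h | ⟨L, x0, hL⟩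
          · simp at h
          · have hw : c :: t = L ++ [x0, c', c', !c'] ++ v := by
              rw [ht]
              have : c :: u = L ++ [x0] := by simpa [List.concat_eq_append] using hL
              rw [show c :: (u ++ c' :: c' :: (!c') :: v) = (c :: u) ++ (c' :: c' :: (!c') :: v)
                from rfl, this]
              simp
            have hlen2 : (L ++ [x0, c', c', !c'] ++ v).length = k := by
              rw [← hw]; simpa using hwlen
            rw [hw] at hx
            cases x0 <;> cases c' <;>
              simp only [Bool.not_true, Bool.not_false] at hx hlen2
            · exact pat2 a ha0 ha1 hpos k L v hlen2 hx
            · exact pat3 a ha0 ha1 hpos k L v hlen2 hx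
            · exact pat4 a ha0 ha1 hpos k L v hlen2 hx
            · exact pat1 a ha0 ha1 hpos k L v hlen2 hx
        · rw [Finset.mem_coe, hF, Finset.mem_image]
          refine ⟨(c, d, j), ?_, ?_⟩
          · simp only [Finset.mem_product, Finset.mem_univ, Finset.mem_range, true_and]
            omega
          · simp only
            rw [← htlen, ← ht]
    have h1 : NExt {M2, M3} a k ≤ F.card := by
      rw [NExt]
      calc (EPts {M2, M3} a k).ncard ≤ (↑F : Set (Fin 2 → ℝ)).ncard :=
            Set.ncard_le_ncard hsub F.finite_toSet
        _ = F.card := Set.ncard_coe_finset F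
    have h2 : F.card ≤ 4 * k := by
      rw [hF]
      calc (((Finset.univ : Finset Bool) ×ˢ (Finset.univ : Finset Bool) ×ˢ
            Finset.range k).image
            (fun cdj => ev (cdj.1 :: g cdj.2.1 (k-1) cdj.2.2) a)).card
          ≤ ((Finset.univ : Finset Bool) ×ˢ (Finset.univ : Finset Bool) ×ˢ
            Finset.range k).card := Finset.card_image_le
        _ = 4 * k := by
            simp [Finset.card_product]
            ring
    omega

end
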